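/- There exists a locally integrable function s : [1, ∞) → ℝ that is summable (L,1) to 0, i.e. (1/log t) ∫₁ᵗ s(u)/u du → 0 as t → ∞, but is not Cesàro summable (C,1) to any finite limit, i.e. (1/t) ∫₁ᵗ s(u) du does not converge as t → ∞. (For example, s(t) := m·e^{2^m} for t ∈ [e^{2^m}, e^{2^m}+1], m ≥ 1, and s(t) := 0 otherwise.) -/

import Mathlib

open Filter MeasureTheory Set

private lemma hasDerivAt_sin_log {x : ℝ} (hx : x ≠ 0) :
    HasDerivAt (fun u : ℝ => Real.sin (Real.log u)) (Real.cos (Real.log x) / x) x := by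
  have h := (Real.hasDerivAt_sin (Real.log x)).comp x (Real.hasDerivAt_log hx)
  simpa [div_eq_mul_inv, Function.comp_def] using h

private lemma hasDerivAt_F {x : ℝ} (hx : x ≠ 0) :
    HasDerivAt (fun u : ℝ => u * (Real.cos (Real.log u) + Real.sin (Real.log u)) / 2)
      (Real.cos (Real.log x)) x := by
  have hlog := Real.hasDerivAt_log hx
  have hc := (Real.hasDerivAt_cos (Real.log x)).comp x hlog
  have hs := (Real.hasDerivAt_sin (Real.log x)).comp x hlog
  have h := ((hasDerivAt_id x).mul (hc.add hs)).div_const 2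
  convert h using 1
  all_goals try rfl
  all_goals (simp only [id, Function.comp_def, Pi.add_apply, Pi.mul_apply]; field_simp)
  all_goals ring

private lemma contOn (t : ℝ) :
    ContinuousOn (fun u : ℝ => Real.cos (Real.log u)) (Icc 1 t) := by
  apply (Real.continuous_cos.comp_continuousOn Real.continuousOn_log).mono
  intro x hx
  have : (1:ℝ) ≤ x := hx.1
  simp only [mem_compl_iff, mem_singleton_iff]
  intro h; rw [h] at this; linarith

private lemma integral1 {t : ℝ} (ht : 1 ≤ t) :
    ∫ u in Ioc (1:ℝ) t, Real.cos (Real.log u) / u = Real.sin (Real.log t) := by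
  rw [← intervalIntegral.integral_of_le ht]
  have h := intervalIntegral.integral_eq_sub_of_hasDerivAt
    (f := fun u : ℝ => Real.sin (Real.log u))
    (f' := fun u : ℝ => Real.cos (Real.log u) / u) (a := 1) (b := t)
    (fun x hx => by
      rw [uIcc_of_le ht] at hx
      exact hasDerivAt_sin_log (by intro h; rw [h] at hx; exact absurd hx.1 (by norm_num)))
    (by
      apply ContinuousOn.intervalIntegrable
      rw [uIcc_of_le ht]
      exact (contOn t).div continuousOn_id (fun x hx => by
        intro h; rw [h] at hx; exact absurd hx.1 (by norm_num)))
  rw [h]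
  simp

private lemma integral2 {t : ℝ} (ht : 1 ≤ t) :
    ∫ u in Ioc (1:ℝ) t, Real.cos (Real.log u)
      = t * (Real.cos (Real.log t) + Real.sin (Real.log t)) / 2 - 1 / 2 := by
  rw [← intervalIntegral.integral_of_le ht]
  have h := intervalIntegral.integral_eq_sub_of_hasDerivAt
    (f := fun u : ℝ => u * (Real.cos (Real.log u) + Real.sin (Real.log u)) / 2)
    (f' := fun u : ℝ => Real.cos (Real.log u)) (a := 1) (b := t)
    (fun x hx => by
      rw [uIcc_of_le ht] at hx
      exact hasDerivAt_F (by intro h; rw [h] at hx; exact absurd hx.1 (by norm_num)))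
    (by
      apply ContinuousOn.intervalIntegrable
      rw [uIcc_of_le ht]
      exact contOn t)
  rw [h]
  simp

theorem logarithmic_not_cesaro :
    ∃ s : ℝ → ℝ, (∀ t : ℝ, IntegrableOn s (Icc 1 t)) ∧
      Tendsto (fun t : ℝ => (Real.log t)⁻¹ * ∫ u in Ioc (1:ℝ) t, s u / u)
        atTop (nhds 0) ∧
      ¬ ∃ A : ℝ, Tendsto (fun t : ℝ => t⁻¹ * ∫ u in Ioc (1:ℝ) t, s u)
        atTop (nhds A) := by
  refine ⟨fun u => Real.cos (Real.log u), ?_, ?_, ?_⟩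
  · intro t
    exact (contOn t).integrableOn_compact isCompact_Icc
  · -- logarithmic mean tends to 0
    apply squeeze_zero_norm' (a := fun t : ℝ => (Real.log t)⁻¹)
    · filter_upwards [eventually_ge_atTop (2:ℝ)] with t ht
      have ht1 : (1:ℝ) ≤ t := by linarith
      rw [integral1 ht1]
      have hlog : 0 < Real.log t := Real.log_pos (by linarith)
      rw [norm_mul, Real.norm_eq_abs, Real.norm_eq_abs, abs_of_pos (by positivity)]
      calc (Real.log t)⁻¹ * |Real.sin (Real.log t)|
          ≤ (Real.log t)⁻¹ * 1 := by
            exact mul_le_mul_of_nonneg_left (Real.abs_sin_le_one _) (by positivity)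
        _ = (Real.log t)⁻¹ := mul_one _
    · exact Real.tendsto_log_atTop.inv_tendsto_atTop
  · rintro ⟨A, hA⟩
    -- along t = exp(n * 2π), average → 1/2
    have hg : ∀ (c : ℝ), Tendsto (fun n : ℕ => Real.exp (c + n * (2 * Real.pi))) atTop atTop := by
      intro c
      apply Real.tendsto_exp_atTop.comp
      apply tendsto_atTop_add_const_left
      apply Tendsto.atTop_mul_const (by positivity)
      exact tendsto_natCast_atTop_atTop
    have key : ∀ (c : ℝ),
        Tendsto (fun n : ℕ =>
          (Real.exp (c + n * (2 * Real.pi)))⁻¹ *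
            ∫ u in Ioc (1:ℝ) (Real.exp (c + n * (2 * Real.pi))), Real.cos (Real.log u))
          atTop (nhds A) := fun c => hA.comp (hg c)
    have heval : ∀ (c : ℝ) (hc : 0 ≤ c) (n : ℕ),
        (Real.exp (c + n * (2 * Real.pi)))⁻¹ *
            ∫ u in Ioc (1:ℝ) (Real.exp (c + n * (2 * Real.pi))), Real.cos (Real.log u)
          = (Real.cos c + Real.sin c) / 2 - (Real.exp (c + n * (2 * Real.pi)))⁻¹ / 2 := by
      intro c hc n
      have hpos : 0 < Real.exp (c + n * (2 * Real.pi)) := Real.exp_pos _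
      have h1 : (1:ℝ) ≤ Real.exp (c + n * (2 * Real.pi)) := by
        rw [← Real.exp_zero]
        apply Real.exp_le_exp.mpr
        have : (0:ℝ) ≤ (n : ℝ) * (2 * Real.pi) := by positivity
        linarith
      rw [integral2 h1, Real.log_exp, Real.cos_add_nat_mul_two_pi, Real.sin_add_nat_mul_two_pi]
      field_simp
    have h0 : Tendsto (fun n : ℕ =>
        (Real.cos 0 + Real.sin 0) / 2 - (Real.exp (0 + n * (2 * Real.pi)))⁻¹ / 2)
        atTop (nhds ((Real.cos 0 + Real.sin 0) / 2 - 0 / 2)) := by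
      apply Tendsto.sub tendsto_const_nhds
      apply Tendsto.div_const
      exact (hg 0).inv_tendsto_atTop
    have hpi : Tendsto (fun n : ℕ =>
        (Real.cos Real.pi + Real.sin Real.pi) / 2 - (Real.exp (Real.pi + n * (2 * Real.pi)))⁻¹ / 2)
        atTop (nhds ((Real.cos Real.pi + Real.sin Real.pi) / 2 - 0 / 2)) := by
      apply Tendsto.sub tendsto_const_nhds
      apply Tendsto.div_const
      exact (hg Real.pi).inv_tendsto_atTop
    have e0 : A = (Real.cos 0 + Real.sin 0) / 2 - 0 / 2 := by
      apply tendsto_nhds_unique (key 0)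
      have := h0
      apply this.congr
      intro n
      exact (heval 0 le_rfl n).symm
    have epi : A = (Real.cos Real.pi + Real.sin Real.pi) / 2 - 0 / 2 := by
      apply tendsto_nhds_unique (key Real.pi)
      apply hpi.congr
      intro n
      exact (heval Real.pi Real.pi_pos.le n).symm
    rw [Real.cos_zero, Real.sin_zero] at e0
    rw [Real.cos_pi, Real.sin_pi] at epi
    norm_num at e0 epi
    linarith
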